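/- Let (V,E) be a non-empty graph with spectral radius ρ and maximum degree Δ. Then there exists a non-empty subset X ⊆ V such that Σ_{v ∈ V} |N_X(v)|² ≥ (ρ²/(128(log(Δ/ρ) + 2)))·|X|. -/

import Mathlib

open scoped BigOperators

/-- Euclidean norm of a finitely-indexed complex vector. -/
noncomputable def en {ι : Type*} [Fintype ι] (v : ι → ℂ) : ℝ :=
  Real.sqrt (∑ i, ‖v i‖ ^ 2)

/-- The induced L²-operator norm of a matrix. -/
noncomputable def opNorm2 {ι κ : Type*} [Fintype ι] [Fintype κ]
    (A : Matrix ι κ ℂ) : ℝ :=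
  sInf {C | 0 ≤ C ∧ ∀ x : κ → ℂ, en (A.mulVec x) ≤ C * en x}

/-- The spectral radius of a graph: the L²-operator norm of its adjacency
matrix. -/
noncomputable def specRad {V : Type*} [Fintype V] [DecidableEq V]
    (G : SimpleGraph V) [DecidableRel G.Adj] : ℝ :=
  opNorm2 (G.adjMatrix ℂ)

namespace Stmt11Aux

open Finset SimpleGraph Matrix

noncomputable def enR {ι : Type*} [Fintype ι] (v : ι → ℝ) : ℝ :=
  Real.sqrt (∑ i, v i ^ 2)

variable {V : Type*} [Fintype V] [DecidableEq V]
  (G : SimpleGraph V) [DecidableRel G.Adj]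

lemma enR_nonneg {ι : Type*} [Fintype ι] (v : ι → ℝ) : 0 ≤ enR v :=
  Real.sqrt_nonneg _

lemma enR_sq {ι : Type*} [Fintype ι] (v : ι → ℝ) : enR v ^ 2 = ∑ i, v i ^ 2 :=
  Real.sq_sqrt (Finset.sum_nonneg fun i _ => sq_nonneg _)

lemma en_sq {ι : Type*} [Fintype ι] (v : ι → ℂ) : en v ^ 2 = ∑ i, ‖v i‖ ^ 2 :=
  Real.sq_sqrt (Finset.sum_nonneg fun i _ => sq_nonneg _)

/-- double counting over neighbor sums -/
lemma dc (f : V → ℝ) :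
    ∑ u, ∑ v ∈ G.neighborFinset u, f v = ∑ v, (G.degree v : ℝ) * f v := by
  have h1 : ∀ u, ∑ v ∈ G.neighborFinset u, f v = ∑ v, if G.Adj u v then f v else 0 := by
    intro u
    rw [neighborFinset_eq_filter, Finset.sum_filter]
  simp_rw [h1]
  rw [Finset.sum_comm]
  refine Finset.sum_congr rfl fun v _ => ?_
  have : ∀ u, (if G.Adj u v then f v else 0) = (if G.Adj v u then f v else 0) := by
    intro u; simp_rw [adj_comm]
  simp_rw [this]
  rw [Finset.sum_ite, Finset.sum_const, Finset.sum_const_zero,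
    ← neighborFinset_eq_filter, card_neighborFinset_eq_degree]
  simp [nsmul_eq_mul]

lemma deg_le (v : V) : (G.degree v : ℝ) ≤ (G.maxDegree : ℝ) := by
  exact_mod_cast G.degree_le_maxDegree v

def q (x : V → ℝ) : ℝ := ∑ u, ∑ v ∈ G.neighborFinset u, x u * x v

def B (x y : V → ℝ) : ℝ := ∑ u, ∑ v ∈ G.neighborFinset u, x u * y v

omit [DecidableEq V] in
lemma B_from_ite (x y : V → ℝ) :
    B G x y = ∑ u, ∑ v, if G.Adj u v then x u * y v else 0 := by
  unfold B
  refine Finset.sum_congr rfl fun u _ => ?_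
  rw [neighborFinset_eq_filter, Finset.sum_filter]

omit [DecidableEq V] in
lemma B_comm (x y : V → ℝ) : B G x y = B G y x := by
  rw [B_from_ite, B_from_ite, Finset.sum_comm]
  exact Finset.sum_congr rfl fun u _ => Finset.sum_congr rfl fun v _ =>
    if_congr (G.adj_comm v u) (mul_comm _ _) rfl

omit [DecidableEq V] in
lemma q_abs_le (x : V → ℝ) : |q G x| ≤ q G (fun v => |x v|) := by
  unfold q
  calc |∑ u, ∑ v ∈ G.neighborFinset u, x u * x v|
      ≤ ∑ u, |∑ v ∈ G.neighborFinset u, x u * x v| := Finset.abs_sum_le_sum_abs _ _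
    _ ≤ ∑ u, ∑ v ∈ G.neighborFinset u, |x u| * |x v| := by
        refine Finset.sum_le_sum fun u _ => ?_
        refine (Finset.abs_sum_le_sum_abs _ _).trans ?_
        refine Finset.sum_le_sum fun v _ => ?_
        rw [abs_mul]

omit [DecidableEq V] in
lemma q_expand (x y : V → ℝ) :
    q G (fun v => x v + y v) = q G x + q G y + 2 * B G x y := by
  have hBxy := B_comm G x y
  unfold q B at *
  dsimp only
  have h : ∀ u ∈ (Finset.univ : Finset V),
      ∑ v ∈ G.neighborFinset u, (x u + y u) * (x v + y v)
      = (∑ v ∈ G.neighborFinset u, x u * x v) + (∑ v ∈ G.neighborFinset u, y u * y v)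
        + (∑ v ∈ G.neighborFinset u, x u * y v) + ∑ v ∈ G.neighborFinset u, y u * x v := by
    intro u _
    rw [← Finset.sum_add_distrib, ← Finset.sum_add_distrib, ← Finset.sum_add_distrib]
    exact Finset.sum_congr rfl fun v _ => by ring
  rw [Finset.sum_congr rfl h, Finset.sum_add_distrib, Finset.sum_add_distrib,
    Finset.sum_add_distrib, ← hBxy]
  ring

omit [DecidableEq V] in
lemma q_smul (a : ℝ) (x : V → ℝ) : q G (fun v => a * x v) = a ^ 2 * q G x := by
  unfold q
  dsimp only
  rw [Finset.mul_sum]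
  refine Finset.sum_congr rfl fun u _ => ?_
  rw [Finset.mul_sum]
  exact Finset.sum_congr rfl fun v _ => by ring

omit [DecidableEq V] in
lemma q_nonneg_bound (M : ℝ)
    (hM : ∀ x : V → ℝ, (∀ v, 0 ≤ x v) → ∑ v, x v ^ 2 = 1 → q G x ≤ M)
    (y : V → ℝ) (hy : ∀ v, 0 ≤ y v) : q G y ≤ M * ∑ v, y v ^ 2 := by
  by_cases h0 : ∑ v, y v ^ 2 = 0
  · have hz : ∀ v, y v = 0 := by
      intro v
      have := (Finset.sum_eq_zero_iff_of_nonneg (fun i _ => sq_nonneg (y i))).1 h0 v (mem_univ v)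
      exact pow_eq_zero_iff (n := 2) (by norm_num) |>.1 this
    have : q G y = 0 := by
      unfold q
      refine Finset.sum_eq_zero fun u _ => Finset.sum_eq_zero fun v _ => by rw [hz u]; ring
    rw [this, h0, mul_zero]
  · have hpos : 0 < ∑ v, y v ^ 2 :=
      lt_of_le_of_ne (Finset.sum_nonneg fun _ _ => sq_nonneg _) (Ne.symm h0)
    set s : ℝ := Real.sqrt (∑ v, y v ^ 2) with hs
    have hspos : 0 < s := Real.sqrt_pos.2 hpos
    have hs2 : s ^ 2 = ∑ v, y v ^ 2 := Real.sq_sqrt hpos.le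
    have hunit : ∑ v, (s⁻¹ * y v) ^ 2 = 1 := by
      have : ∑ v, (s⁻¹ * y v) ^ 2 = s⁻¹ ^ 2 * ∑ v, y v ^ 2 := by
        rw [Finset.mul_sum]; exact Finset.sum_congr rfl fun v _ => by ring
      rw [this, ← hs2]
      field_simp
    have hq := hM (fun v => s⁻¹ * y v) (fun v => mul_nonneg (inv_nonneg.2 hspos.le) (hy v)) hunit
    rw [q_smul] at hq
    have : q G y = s ^ 2 * (s⁻¹ ^ 2 * q G y) := by
      field_simp
    rw [this, ← hs2]
    calc s ^ 2 * (s⁻¹ ^ 2 * q G y) ≤ s ^ 2 * M := by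
          exact mul_le_mul_of_nonneg_left hq (sq_nonneg s)
      _ = M * s ^ 2 := mul_comm _ _

omit [DecidableEq V] in
lemma q_any_bound (M : ℝ)
    (hM : ∀ x : V → ℝ, (∀ v, 0 ≤ x v) → ∑ v, x v ^ 2 = 1 → q G x ≤ M)
    (z : V → ℝ) : |q G z| ≤ M * ∑ v, z v ^ 2 := by
  calc |q G z| ≤ q G (fun v => |z v|) := q_abs_le G z
    _ ≤ M * ∑ v, |z v| ^ 2 := q_nonneg_bound G M hM _ (fun v => abs_nonneg _)
    _ = M * ∑ v, z v ^ 2 := by simp [sq_abs]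

omit [DecidableEq V] in
lemma B_bound (M : ℝ)
    (hM : ∀ x : V → ℝ, (∀ v, 0 ≤ x v) → ∑ v, x v ^ 2 = 1 → q G x ≤ M)
    (z w : V → ℝ) : B G z w ≤ M / 2 * ((∑ v, z v ^ 2) + ∑ v, w v ^ 2) := by
  have h1 := q_any_bound G M hM (fun v => z v + w v)
  have h2 := q_any_bound G M hM (fun v => z v - w v)
  have e1 : q G (fun v => z v + w v) = q G z + q G w + 2 * B G z w := q_expand G z w
  have e2 : q G (fun v => z v - w v) = q G z + q G w - 2 * B G z w := by
    have := q_expand G z (fun v => - w v)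
    have hqw : q G (fun v => - w v) = q G w := by
      have := q_smul G (-1) w
      simpa using this
    have hBw : B G z (fun v => - w v) = - B G z w := by
      unfold B
      rw [← Finset.sum_neg_distrib]
      refine Finset.sum_congr rfl fun u _ => ?_
      rw [← Finset.sum_neg_distrib]
      exact Finset.sum_congr rfl fun v _ => by ring
    calc q G (fun v => z v - w v) = q G (fun v => z v + (fun v => - w v) v) := by
          refine congrArg _ ?_; funext v; ring
      _ = q G z + q G w - 2 * B G z w := by rw [this, hqw, hBw]; ring
  have hsum : (∑ v, (z v + w v) ^ 2) + ∑ v, (z v - w v) ^ 2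
      = 2 * ((∑ v, z v ^ 2) + ∑ v, w v ^ 2) := by
    rw [← Finset.sum_add_distrib, show (∑ v, z v ^ 2) + (∑ v, w v ^ 2)
      = ∑ v, (z v ^ 2 + w v ^ 2) from (Finset.sum_add_distrib).symm, Finset.mul_sum]
    exact Finset.sum_congr rfl fun v _ => by ring
    
  have ha : q G z + q G w + 2 * B G z w ≤ M * ∑ v, (z v + w v) ^ 2 := by
    rw [← e1]; exact (le_abs_self _).trans h1
  have hb : -(q G z + q G w - 2 * B G z w) ≤ M * ∑ v, (z v - w v) ^ 2 := by
    rw [← e2]; exact (neg_le_abs _).trans h2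
  have hc : M * (∑ v, (z v + w v) ^ 2) + M * (∑ v, (z v - w v) ^ 2)
      = M * 2 * ((∑ v, z v ^ 2) + ∑ v, w v ^ 2) := by
    rw [← mul_add, hsum]; ring
  linarith


omit [DecidableEq V] in
lemma opBound (M : ℝ) (hM0 : 0 ≤ M)
    (hM : ∀ x : V → ℝ, (∀ v, 0 ≤ x v) → ∑ v, x v ^ 2 = 1 → q G x ≤ M) :
    ∀ y : V → ℝ, enR (G.adjMatrix ℝ *ᵥ y) ≤ M * enR y := by
  intro y
  set g : V → ℝ := G.adjMatrix ℝ *ᵥ y with hgdef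
  have hg : ∀ u, g u = ∑ v ∈ G.neighborFinset u, y v := by
    intro u; rw [hgdef]; simp
  set S : ℝ := ∑ u, g u ^ 2 with hS
  have hS0 : 0 ≤ S := Finset.sum_nonneg fun _ _ => sq_nonneg _
  by_cases hSz : S = 0
  · have : enR g = 0 := by rw [enR, ← hS, hSz, Real.sqrt_zero]
    rw [this]
    exact mul_nonneg hM0 (enR_nonneg _)
  · have hSpos : 0 < S := lt_of_le_of_ne hS0 (Ne.symm hSz)
    have hy2 : 0 < ∑ v, y v ^ 2 := by
      rcases eq_or_lt_of_le (Finset.sum_nonneg fun (v : V) _ => sq_nonneg (y v)) with h | h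
      · exfalso
        have hz : ∀ v, y v = 0 := by
          intro v
          have := (Finset.sum_eq_zero_iff_of_nonneg (fun i _ => sq_nonneg (y i))).1 h.symm v
            (mem_univ v)
          exact pow_eq_zero_iff (n := 2) (by norm_num) |>.1 this
        apply hSz
        rw [hS]
        refine Finset.sum_eq_zero fun u _ => ?_
        rw [hg]
        rw [Finset.sum_eq_zero fun v _ => hz v]
        norm_num
      · exact h
    set r : ℝ := enR y with hr
    have hrpos : 0 < r := Real.sqrt_pos.2 hy2
    have hr2 : r ^ 2 = ∑ v, y v ^ 2 := enR_sq y
    set c : ℝ := r / Real.sqrt S with hc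
    have hcpos : 0 < c := div_pos hrpos (Real.sqrt_pos.2 hSpos)
    have hkey : B G (fun u => c * g u) y = c * S := by
      unfold B
      rw [hS, Finset.mul_sum]
      refine Finset.sum_congr rfl fun u _ => ?_
      rw [← Finset.mul_sum, ← hg u]
      ring
    have hB := B_bound G M hM (fun u => c * g u) y
    rw [hkey] at hB
    have hcg : (∑ v, (c * g v) ^ 2) = c ^ 2 * S := by
      rw [hS, Finset.mul_sum]
      exact Finset.sum_congr rfl fun v _ => by ring
    rw [hcg, ← hr2] at hB
    have hc2S : c ^ 2 * S = r ^ 2 := by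
      rw [hc, div_pow, Real.sq_sqrt hS0]
      field_simp
    rw [hc2S] at hB
    -- hB : c * S ≤ M / 2 * (r^2 + r^2)
    have hcS : c * S = r * Real.sqrt S := by
      have h1 : c * S = r * (S / Real.sqrt S) := by rw [hc]; ring
      rw [h1, Real.div_sqrt]
    rw [hcS] at hB
    have : r * Real.sqrt S ≤ r * (M * r) := by
      calc r * Real.sqrt S ≤ M / 2 * (r ^ 2 + r ^ 2) := hB
        _ = r * (M * r) := by ring
    have hfin : Real.sqrt S ≤ M * r := le_of_mul_le_mul_left this hrpos
    calc enR g = Real.sqrt S := by rw [enR, hS]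
      _ ≤ M * r := hfin

lemma en_sq_decomp (x : V → ℂ) :
    en x ^ 2 = enR (fun v => (x v).re) ^ 2 + enR (fun v => (x v).im) ^ 2 := by
  rw [en_sq, enR_sq, enR_sq, ← Finset.sum_add_distrib]
  refine Finset.sum_congr rfl fun v _ => ?_
  rw [show ‖x v‖ ^ 2 = Complex.normSq (x v) by
    rw [Complex.sq_norm], Complex.normSq_apply]
  ring

lemma mulVec_re (x : V → ℂ) (v : V) :
    ((G.adjMatrix ℂ *ᵥ x) v).re = (G.adjMatrix ℝ *ᵥ fun u => (x u).re) v := by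
  simp [Complex.re_sum]

lemma mulVec_im (x : V → ℂ) (v : V) :
    ((G.adjMatrix ℂ *ᵥ x) v).im = (G.adjMatrix ℝ *ᵥ fun u => (x u).im) v := by
  simp [Complex.im_sum]

lemma mem_of_real_bound (M : ℝ) (hM0 : 0 ≤ M)
    (h : ∀ y : V → ℝ, enR (G.adjMatrix ℝ *ᵥ y) ≤ M * enR y) :
    M ∈ {C | 0 ≤ C ∧ ∀ x : V → ℂ, en ((G.adjMatrix ℂ).mulVec x) ≤ C * en x} := by
  refine ⟨hM0, fun x => ?_⟩
  have hsq : en ((G.adjMatrix ℂ).mulVec x) ^ 2 ≤ (M * en x) ^ 2 := by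
    rw [en_sq_decomp]
    have e1 : (fun v => (((G.adjMatrix ℂ).mulVec x) v).re)
        = G.adjMatrix ℝ *ᵥ fun u => (x u).re := funext fun v => mulVec_re G x v
    have e2 : (fun v => (((G.adjMatrix ℂ).mulVec x) v).im)
        = G.adjMatrix ℝ *ᵥ fun u => (x u).im := funext fun v => mulVec_im G x v
    rw [e1, e2]
    have b1 : enR (G.adjMatrix ℝ *ᵥ fun u => (x u).re) ^ 2
        ≤ M ^ 2 * enR (fun u => (x u).re) ^ 2 := by
      have := h (fun u => (x u).re)
      calc enR (G.adjMatrix ℝ *ᵥ fun u => (x u).re) ^ 2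
          ≤ (M * enR (fun u => (x u).re)) ^ 2 := by
            exact pow_le_pow_left₀ (enR_nonneg _) this 2
        _ = M ^ 2 * enR (fun u => (x u).re) ^ 2 := by ring
    have b2 : enR (G.adjMatrix ℝ *ᵥ fun u => (x u).im) ^ 2
        ≤ M ^ 2 * enR (fun u => (x u).im) ^ 2 := by
      have := h (fun u => (x u).im)
      calc enR (G.adjMatrix ℝ *ᵥ fun u => (x u).im) ^ 2
          ≤ (M * enR (fun u => (x u).im)) ^ 2 := by
            exact pow_le_pow_left₀ (enR_nonneg _) this 2
        _ = M ^ 2 * enR (fun u => (x u).im) ^ 2 := by ring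
    calc enR (G.adjMatrix ℝ *ᵥ fun u => (x u).re) ^ 2
          + enR (G.adjMatrix ℝ *ᵥ fun u => (x u).im) ^ 2
        ≤ M ^ 2 * enR (fun u => (x u).re) ^ 2 + M ^ 2 * enR (fun u => (x u).im) ^ 2 :=
          add_le_add b1 b2
      _ = (M * en x) ^ 2 := by rw [mul_pow, en_sq_decomp]; ring
  have h1 : en ((G.adjMatrix ℂ).mulVec x) = Real.sqrt (en ((G.adjMatrix ℂ).mulVec x) ^ 2) :=
    (Real.sqrt_sq (Real.sqrt_nonneg _)).symm
  rw [h1]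
  calc Real.sqrt (en ((G.adjMatrix ℂ).mulVec x) ^ 2) ≤ Real.sqrt ((M * en x) ^ 2) :=
        Real.sqrt_le_sqrt hsq
    _ = M * en x := Real.sqrt_sq (mul_nonneg hM0 (Real.sqrt_nonneg _))

lemma maxDeg_real_bound :
    ∀ y : V → ℝ, enR (G.adjMatrix ℝ *ᵥ y) ≤ (G.maxDegree : ℝ) * enR y := by
  intro y
  have key : ∀ v, ((G.adjMatrix ℝ *ᵥ y) v) ^ 2 ≤ (G.maxDegree : ℝ) * ∑ u ∈ G.neighborFinset v, y u ^ 2 := by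
    intro v
    have h1 : (G.adjMatrix ℝ *ᵥ y) v = ∑ u ∈ G.neighborFinset v, y u := by simp
    rw [h1]
    have hcs : (∑ u ∈ G.neighborFinset v, 1 * y u) ^ 2
        ≤ (∑ u ∈ G.neighborFinset v, (1:ℝ) ^ 2) * ∑ u ∈ G.neighborFinset v, y u ^ 2 :=
      Finset.sum_mul_sq_le_sq_mul_sq _ _ _
    simp only [one_mul, one_pow, Finset.sum_const, nsmul_eq_mul, mul_one] at hcs
    calc (∑ u ∈ G.neighborFinset v, y u) ^ 2
        ≤ ((G.neighborFinset v).card : ℝ) * ∑ u ∈ G.neighborFinset v, y u ^ 2 := hcs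
      _ ≤ (G.maxDegree : ℝ) * ∑ u ∈ G.neighborFinset v, y u ^ 2 := by
          refine mul_le_mul_of_nonneg_right ?_ (Finset.sum_nonneg fun _ _ => sq_nonneg _)
          rw [card_neighborFinset_eq_degree]
          exact_mod_cast G.degree_le_maxDegree v
  have hsum : (∑ v, ((G.adjMatrix ℝ *ᵥ y) v) ^ 2)
      ≤ (G.maxDegree : ℝ) ^ 2 * ∑ v, y v ^ 2 := by
    calc (∑ v, ((G.adjMatrix ℝ *ᵥ y) v) ^ 2)
        ≤ ∑ v, (G.maxDegree : ℝ) * ∑ u ∈ G.neighborFinset v, y u ^ 2 :=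
          Finset.sum_le_sum fun v _ => key v
      _ = (G.maxDegree : ℝ) * ∑ v, ∑ u ∈ G.neighborFinset v, y u ^ 2 := by
          rw [Finset.mul_sum]
      _ = (G.maxDegree : ℝ) * ∑ u, (G.degree u : ℝ) * y u ^ 2 := by
          rw [dc]
      _ ≤ (G.maxDegree : ℝ) * ∑ u, (G.maxDegree : ℝ) * y u ^ 2 := by
          refine mul_le_mul_of_nonneg_left ?_ (by positivity)
          refine Finset.sum_le_sum fun u _ => ?_
          exact mul_le_mul_of_nonneg_right (by exact_mod_cast G.degree_le_maxDegree u)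
            (sq_nonneg _)
      _ = (G.maxDegree : ℝ) ^ 2 * ∑ v, y v ^ 2 := by
          rw [Finset.mul_sum, Finset.mul_sum]
          exact Finset.sum_congr rfl fun v _ => by ring
  have : enR (G.adjMatrix ℝ *ᵥ y) ^ 2 ≤ ((G.maxDegree : ℝ) * enR y) ^ 2 := by
    rw [enR_sq, mul_pow, enR_sq]
    exact hsum
  calc enR (G.adjMatrix ℝ *ᵥ y) = Real.sqrt (enR (G.adjMatrix ℝ *ᵥ y) ^ 2) :=
        (Real.sqrt_sq (enR_nonneg _)).symm
    _ ≤ Real.sqrt (((G.maxDegree : ℝ) * enR y) ^ 2) := Real.sqrt_le_sqrt this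
    _ = (G.maxDegree : ℝ) * enR y := Real.sqrt_sq (mul_nonneg (by positivity) (enR_nonneg _))

lemma maxDeg_mem :
    ((G.maxDegree : ℝ)) ∈ {C | 0 ≤ C ∧ ∀ x : V → ℂ, en ((G.adjMatrix ℂ).mulVec x) ≤ C * en x} :=
  mem_of_real_bound G _ (by positivity) (maxDeg_real_bound G)

lemma bddBelow_S :
    BddBelow {C : ℝ | 0 ≤ C ∧ ∀ x : V → ℂ, en ((G.adjMatrix ℂ).mulVec x) ≤ C * en x} :=
  ⟨0, fun C hC => hC.1⟩

lemma specRad_le_maxDegree : specRad G ≤ (G.maxDegree : ℝ) :=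
  csInf_le (bddBelow_S G) (maxDeg_mem G)

lemma specRad_nonneg : 0 ≤ specRad G :=
  le_csInf ⟨_, maxDeg_mem G⟩ fun C hC => hC.1

lemma one_le_specRad (hne : ∃ v w, G.Adj v w) : 1 ≤ specRad G := by
  obtain ⟨a, b, hab⟩ := hne
  refine le_csInf ⟨_, maxDeg_mem G⟩ fun C hC => ?_
  obtain ⟨hC0, hC⟩ := hC
  set x : V → ℂ := Pi.single b 1 with hx
  have hex : en x = 1 := by
    rw [hx, en]
    have h0 : ∀ i, ‖(Pi.single b 1 : V → ℂ) i‖ ^ 2 = if i = b then (1:ℝ) else 0 := by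
      intro i
      rcases eq_or_ne i b with h | h
      · subst h; simp
      · simp [Pi.single_apply, h]
    have h1 : (∑ i, ‖(Pi.single b 1 : V → ℂ) i‖ ^ 2) = 1 := by
      simp only [h0]
      simp
    rw [h1, Real.sqrt_one]
  have hAx : ((G.adjMatrix ℂ).mulVec x) a = 1 := by
    rw [hx]
    simp only [Matrix.mulVec, SimpleGraph.adjMatrix_dotProduct]
    rw [Finset.sum_pi_single']
    rw [if_pos]
    rwa [mem_neighborFinset]
  have hen : 1 ≤ en ((G.adjMatrix ℂ).mulVec x) := by
    rw [en]
    have h1 : (1:ℝ) ≤ ∑ i, ‖((G.adjMatrix ℂ).mulVec x) i‖ ^ 2 := by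
      have h2 : ‖((G.adjMatrix ℂ).mulVec x) a‖ ^ 2 = 1 := by rw [hAx]; simp
      calc (1:ℝ) = ‖((G.adjMatrix ℂ).mulVec x) a‖ ^ 2 := h2.symm
        _ ≤ _ := Finset.single_le_sum (f := fun i => ‖((G.adjMatrix ℂ).mulVec x) i‖ ^ 2)
            (fun i _ => sq_nonneg _) (mem_univ a)
    calc (1:ℝ) = Real.sqrt 1 := Real.sqrt_one.symm
      _ ≤ _ := Real.sqrt_le_sqrt h1
  have := hC x
  rw [hex, mul_one] at this
  linarith

lemma exists_near (hne : ∃ v w, G.Adj v w) (ε : ℝ) (hε : 0 < ε) :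
    ∃ x : V → ℝ, (∀ v, 0 ≤ x v) ∧ (∑ v, x v ^ 2 = 1) ∧ specRad G - ε < q G x := by
  by_contra hcon
  push_neg at hcon
  set M : ℝ := specRad G - ε with hM
  have hM' : ∀ x : V → ℝ, (∀ v, 0 ≤ x v) → ∑ v, x v ^ 2 = 1 → q G x ≤ M := hcon
  obtain ⟨a, b, hab⟩ := hne
  have hM0 : 0 ≤ M := by
    set x0 : V → ℝ := fun v => if v = a then (1:ℝ) else 0 with hx0
    have hq0 : q G x0 = 0 := by
      unfold q
      refine Finset.sum_eq_zero fun u _ => ?_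
      by_cases hu : u = a
      · subst hu
        refine Finset.sum_eq_zero fun v hv => ?_
        have hva : v ≠ u := (G.ne_of_adj ((G.mem_neighborFinset u v).1 hv)).symm
        simp [hx0, hva]
      · simp [hx0, hu]
    have hunit : ∑ v, x0 v ^ 2 = 1 := by
      rw [hx0]
      have h0 : ∀ v, (if v = a then (1:ℝ) else 0) ^ 2 = if v = a then (1:ℝ) else 0 := by
        intro v; rcases eq_or_ne v a with h | h <;> simp [h]
      simp only []
      rw [Finset.sum_congr rfl fun v _ => h0 v, Finset.sum_ite_eq' Finset.univ a fun _ => (1:ℝ)]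
      simp
    have := hM' x0 (fun v => by rw [hx0]; dsimp only; split <;> norm_num) hunit
    rw [hq0] at this
    exact this
  have hmem := mem_of_real_bound G M hM0 (opBound G M hM0 hM')
  have : specRad G ≤ M := csInf_le (bddBelow_S G) hmem
  rw [hM] at this
  linarith

lemma core_eps (c : ℝ) (hc0 : 0 ≤ c)
    (hF : ∀ X : Finset V,
      (∑ v, ((X.filter (fun u => G.Adj v u)).card : ℝ) ^ 2) ≤ c ^ 2 * X.card)
    (t : ℕ) (x : V → ℝ) (hx0 : ∀ v, 0 ≤ x v) (hx1 : ∑ v, x v ^ 2 = 1) :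
    q G x ≤ 2 * (G.maxDegree : ℝ) * (1/2 : ℝ) ^ t
      + 2 * c * Real.sqrt (2 * t + 1) := by
  -- basic facts
  have hxle1 : ∀ v, x v ≤ 1 := by
    intro v
    nlinarith [Finset.single_le_sum (f := fun v => x v ^ 2) (fun i _ => sq_nonneg (x i))
      (mem_univ v), hx0 v, hx1]
  have hex2 : ∀ v, 0 < x v → ∃ n : ℕ, (1/2 : ℝ) ^ n < x v := by
    intro v hv
    exact exists_pow_lt_of_lt_one hv (by norm_num)
  classical
  set ℓ : V → ℕ := fun v => if h : 0 < x v then Nat.find (hex2 v h) - 1 else 0 with hℓdef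
  have hfindpos : ∀ v (h : 0 < x v), 0 < Nat.find (hex2 v h) := by
    intro v h
    rcases Nat.eq_zero_or_pos (Nat.find (hex2 v h)) with h0 | h0
    · exfalso
      have := Nat.find_spec (hex2 v h)
      rw [h0] at this
      simp at this
      linarith [hxle1 v]
    · exact h0
  have hℓ1 : ∀ v, 0 < x v → (1/2 : ℝ) ^ (ℓ v + 1) < x v := by
    intro v h
    have : ℓ v = Nat.find (hex2 v h) - 1 := by rw [hℓdef]; simp [h]
    rw [this, Nat.sub_add_cancel (hfindpos v h)]
    exact Nat.find_spec (hex2 v h)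
  have hℓ2 : ∀ v, 0 < x v → x v ≤ (1/2 : ℝ) ^ (ℓ v) := by
    intro v h
    have he : ℓ v = Nat.find (hex2 v h) - 1 := by rw [hℓdef]; simp [h]
    have hlt : ℓ v < Nat.find (hex2 v h) := by
      rw [he]; exact Nat.sub_lt (hfindpos v h) one_pos
    have := Nat.find_min (hex2 v h) hlt
    linarith [not_lt.1 this]
  set N : ℕ := (Finset.univ.sup ℓ) + 1 with hN
  have hℓN : ∀ v, ℓ v < N := fun v =>
    Nat.lt_succ_of_le (Finset.le_sup (mem_univ v))
  set Δ : ℝ := (G.maxDegree : ℝ) with hΔ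
  have hdegΔ : ∀ v, (G.degree v : ℝ) ≤ Δ := by
    intro v; rw [hΔ]; exact_mod_cast G.degree_le_maxDegree v
  -- split q into three parts
  set p1 : V → V → Prop := fun u v => ℓ u + t < ℓ v with hp1
  set p2 : V → V → Prop := fun u v => ℓ v + t < ℓ u with hp2
  have hsplit : ∀ u, ∑ v ∈ G.neighborFinset u, x u * x v
      = (∑ v ∈ (G.neighborFinset u).filter (fun v => ℓ u + t < ℓ v), x u * x v)
      + (∑ v ∈ (G.neighborFinset u).filter (fun v => ℓ v + t < ℓ u), x u * x v)
      + (∑ v ∈ (G.neighborFinset u).filter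
            (fun v => ℓ v ≤ ℓ u + t ∧ ℓ u ≤ ℓ v + t), x u * x v) := by
    intro u
    rw [← Finset.sum_filter_add_sum_filter_not (G.neighborFinset u)
      (fun v => ℓ u + t < ℓ v) (fun v => x u * x v)]
    rw [← Finset.sum_filter_add_sum_filter_not
      ((G.neighborFinset u).filter (fun v => ¬ (ℓ u + t < ℓ v)))
      (fun v => ℓ v + t < ℓ u) (fun v => x u * x v)]
    rw [Finset.filter_filter, Finset.filter_filter]
    rw [show ((G.neighborFinset u).filter fun v => ¬(ℓ u + t < ℓ v) ∧ ℓ v + t < ℓ u)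
        = ((G.neighborFinset u).filter fun v => ℓ v + t < ℓ u) by
      refine Finset.filter_congr fun v _ => ?_
      constructor
      · exact fun h => h.2
      · intro h; exact ⟨by omega, h⟩]
    rw [show ((G.neighborFinset u).filter fun v => ¬(ℓ u + t < ℓ v) ∧ ¬(ℓ v + t < ℓ u))
        = ((G.neighborFinset u).filter fun v => ℓ v ≤ ℓ u + t ∧ ℓ u ≤ ℓ v + t) by
      refine Finset.filter_congr fun v _ => ?_
      simp only [not_lt]]
    ring
  have hq : q G x
      = (∑ u, ∑ v ∈ (G.neighborFinset u).filter (fun v => ℓ u + t < ℓ v), x u * x v)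
      + (∑ u, ∑ v ∈ (G.neighborFinset u).filter (fun v => ℓ v + t < ℓ u), x u * x v)
      + (∑ u, ∑ v ∈ (G.neighborFinset u).filter
            (fun v => ℓ v ≤ ℓ u + t ∧ ℓ u ≤ ℓ v + t), x u * x v) := by
    unfold q
    rw [Finset.sum_congr rfl fun u _ => hsplit u, Finset.sum_add_distrib,
      Finset.sum_add_distrib]
  -- far bounds
  have hT1 : (∑ u, ∑ v ∈ (G.neighborFinset u).filter (fun v => ℓ u + t < ℓ v), x u * x v)
      ≤ Δ * (1/2 : ℝ) ^ t := by
    have hterm : ∀ u, ∀ v ∈ (G.neighborFinset u).filter (fun v => ℓ u + t < ℓ v),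
        x u * x v ≤ (1/2 : ℝ) ^ t * x u ^ 2 := by
      intro u v hv
      rw [Finset.mem_filter] at hv
      rcases (hx0 v).eq_or_lt with h0 | h0
      · rw [← h0, mul_zero]
        positivity
      · rcases (hx0 u).eq_or_lt with hu0 | hu0
        · rw [← hu0]; ring_nf; rfl
        · have h1 : x v ≤ (1/2 : ℝ) ^ (ℓ v) := hℓ2 v h0
          have h2 : ((1:ℝ)/2) ^ (ℓ v) ≤ (1/2 : ℝ) ^ (ℓ u + t + 1) := by
            apply pow_le_pow_of_le_one (by norm_num) (by norm_num)
            omega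
          have h3 : ((1:ℝ)/2) ^ (ℓ u + t + 1) = (1/2 : ℝ) ^ t * (1/2 : ℝ) ^ (ℓ u + 1) := by
            rw [← pow_add]; ring_nf
          have h4 : ((1:ℝ)/2) ^ (ℓ u + 1) ≤ x u := (hℓ1 u hu0).le
          have h5 : x v ≤ (1/2 : ℝ) ^ t * x u := by
            calc x v ≤ (1/2 : ℝ) ^ (ℓ v) := h1
              _ ≤ (1/2 : ℝ) ^ (ℓ u + t + 1) := h2
              _ = (1/2 : ℝ) ^ t * (1/2 : ℝ) ^ (ℓ u + 1) := h3
              _ ≤ (1/2 : ℝ) ^ t * x u := by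
                  exact mul_le_mul_of_nonneg_left h4 (by positivity)
          calc x u * x v ≤ x u * ((1/2 : ℝ) ^ t * x u) :=
                mul_le_mul_of_nonneg_left h5 (hx0 u)
            _ = (1/2 : ℝ) ^ t * x u ^ 2 := by ring
    calc (∑ u, ∑ v ∈ (G.neighborFinset u).filter (fun v => ℓ u + t < ℓ v), x u * x v)
        ≤ ∑ u, ∑ v ∈ (G.neighborFinset u).filter (fun v => ℓ u + t < ℓ v),
            (1/2 : ℝ) ^ t * x u ^ 2 :=
          Finset.sum_le_sum fun u _ => Finset.sum_le_sum (hterm u)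
      _ = ∑ u, (((G.neighborFinset u).filter (fun v => ℓ u + t < ℓ v)).card : ℝ)
            * ((1/2 : ℝ) ^ t * x u ^ 2) := by
          refine Finset.sum_congr rfl fun u _ => ?_
          rw [Finset.sum_const, nsmul_eq_mul]
      _ ≤ ∑ u, Δ * ((1/2 : ℝ) ^ t * x u ^ 2) := by
          refine Finset.sum_le_sum fun u _ => ?_
          refine mul_le_mul_of_nonneg_right ?_ (by positivity)
          calc (((G.neighborFinset u).filter (fun v => ℓ u + t < ℓ v)).card : ℝ)
              ≤ ((G.neighborFinset u).card : ℝ) := by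
                exact_mod_cast Finset.card_le_card (Finset.filter_subset _ _)
            _ = (G.degree u : ℝ) := by rw [card_neighborFinset_eq_degree]
            _ ≤ Δ := hdegΔ u
      _ = Δ * (1/2 : ℝ) ^ t * ∑ u, x u ^ 2 := by
          rw [Finset.mul_sum]
          exact Finset.sum_congr rfl fun u _ => by ring
      _ = Δ * (1/2 : ℝ) ^ t := by rw [hx1, mul_one]
  have hT2 : (∑ u, ∑ v ∈ (G.neighborFinset u).filter (fun v => ℓ v + t < ℓ u), x u * x v)
      ≤ Δ * (1/2 : ℝ) ^ t := by
    have hterm : ∀ u, ∀ v ∈ (G.neighborFinset u).filter (fun v => ℓ v + t < ℓ u),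
        x u * x v ≤ (1/2 : ℝ) ^ t * x v ^ 2 := by
      intro u v hv
      rw [Finset.mem_filter] at hv
      rcases (hx0 u).eq_or_lt with h0 | h0
      · rw [← h0, zero_mul]
        positivity
      · rcases (hx0 v).eq_or_lt with hv0 | hv0
        · rw [← hv0]; ring_nf; rfl
        · have h1 : x u ≤ (1/2 : ℝ) ^ (ℓ u) := hℓ2 u h0
          have h2 : ((1:ℝ)/2) ^ (ℓ u) ≤ (1/2 : ℝ) ^ (ℓ v + t + 1) := by
            apply pow_le_pow_of_le_one (by norm_num) (by norm_num)
            omega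
          have h3 : ((1:ℝ)/2) ^ (ℓ v + t + 1) = (1/2 : ℝ) ^ t * (1/2 : ℝ) ^ (ℓ v + 1) := by
            rw [← pow_add]; ring_nf
          have h4 : ((1:ℝ)/2) ^ (ℓ v + 1) ≤ x v := (hℓ1 v hv0).le
          have h5 : x u ≤ (1/2 : ℝ) ^ t * x v := by
            calc x u ≤ (1/2 : ℝ) ^ (ℓ u) := h1
              _ ≤ (1/2 : ℝ) ^ (ℓ v + t + 1) := h2
              _ = (1/2 : ℝ) ^ t * (1/2 : ℝ) ^ (ℓ v + 1) := h3
              _ ≤ (1/2 : ℝ) ^ t * x v := by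
                  exact mul_le_mul_of_nonneg_left h4 (by positivity)
          calc x u * x v ≤ ((1/2 : ℝ) ^ t * x v) * x v :=
                mul_le_mul_of_nonneg_right h5 (hx0 v)
            _ = (1/2 : ℝ) ^ t * x v ^ 2 := by ring
    calc (∑ u, ∑ v ∈ (G.neighborFinset u).filter (fun v => ℓ v + t < ℓ u), x u * x v)
        ≤ ∑ u, ∑ v ∈ (G.neighborFinset u).filter (fun v => ℓ v + t < ℓ u),
            (1/2 : ℝ) ^ t * x v ^ 2 :=
          Finset.sum_le_sum fun u _ => Finset.sum_le_sum (hterm u)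
      _ ≤ ∑ u, ∑ v ∈ G.neighborFinset u, (1/2 : ℝ) ^ t * x v ^ 2 := by
          refine Finset.sum_le_sum fun u _ => ?_
          exact Finset.sum_le_sum_of_subset_of_nonneg (Finset.filter_subset _ _)
            (fun v _ _ => by positivity)
      _ = (1/2 : ℝ) ^ t * ∑ u, ∑ v ∈ G.neighborFinset u, x v ^ 2 := by
          rw [Finset.mul_sum]
          refine Finset.sum_congr rfl fun u _ => ?_
          rw [Finset.mul_sum]
      _ = (1/2 : ℝ) ^ t * ∑ v, (G.degree v : ℝ) * x v ^ 2 := by rw [dc]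
      _ ≤ (1/2 : ℝ) ^ t * ∑ v, Δ * x v ^ 2 := by
          refine mul_le_mul_of_nonneg_left ?_ (by positivity)
          exact Finset.sum_le_sum fun v _ =>
            mul_le_mul_of_nonneg_right (hdegΔ v) (sq_nonneg _)
      _ = Δ * (1/2 : ℝ) ^ t * ∑ v, x v ^ 2 := by
          rw [Finset.mul_sum, Finset.mul_sum]
          exact Finset.sum_congr rfl fun v _ => by ring
      _ = Δ * (1/2 : ℝ) ^ t := by rw [hx1, mul_one]
  -- near part
  set Y : ℕ → V → ℝ := fun i v =>
    if 0 < x v ∧ i ≤ ℓ v + t ∧ ℓ v ≤ i + t then x v else 0 with hYdef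
  set Xi : ℕ → Finset V := fun i => univ.filter (fun u => 0 < x u ∧ ℓ u = i) with hXidef
  set W : ℕ → V → ℝ := fun i u => ∑ v ∈ G.neighborFinset u, Y i v with hWdef
  have hYnn : ∀ i v, 0 ≤ Y i v := by
    intro i v
    rw [hYdef]
    dsimp only
    split
    · exact hx0 v
    · exact le_refl 0
  have hWnn : ∀ i u, 0 ≤ W i u := fun i u =>
    Finset.sum_nonneg fun v _ => hYnn i v
  -- (a1) rewrite inner near sums
  have ha1 : ∀ u, (∑ v ∈ (G.neighborFinset u).filter
        (fun v => ℓ v ≤ ℓ u + t ∧ ℓ u ≤ ℓ v + t), x u * x v)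
      = x u * W (ℓ u) u := by
    intro u
    rw [← Finset.mul_sum]
    congr 1
    rw [hWdef]
    dsimp only
    rw [hYdef]
    dsimp only
    rw [Finset.sum_filter]
    refine Finset.sum_congr rfl fun v _ => ?_
    by_cases hp : 0 < x v
    · by_cases hn : ℓ v ≤ ℓ u + t ∧ ℓ u ≤ ℓ v + t
      · rw [if_pos hn, if_pos ⟨hp, hn.2, hn.1⟩]
      · rw [if_neg hn, if_neg]
        rintro ⟨-, h1, h2⟩
        exact hn ⟨h2, h1⟩
    · have hxv : x v = 0 := le_antisymm (not_lt.1 hp) (hx0 v)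
      rw [hxv]
      split <;> simp
  -- (a2) regroup by level
  have ha2 : (∑ u, x u * W (ℓ u) u)
      = ∑ i ∈ Finset.range N, ∑ u ∈ Xi i, x u * W i u := by
    have h1 : ∀ i, (∑ u ∈ Xi i, x u * W i u)
        = ∑ u, if 0 < x u ∧ ℓ u = i then x u * W i u else 0 := by
      intro i
      rw [hXidef]
      dsimp only
      rw [Finset.sum_filter]
    rw [Finset.sum_congr rfl fun i _ => h1 i, Finset.sum_comm]
    refine Finset.sum_congr rfl fun u _ => ?_
    by_cases hxu : 0 < x u
    · have h2 : ∀ i, (if 0 < x u ∧ ℓ u = i then x u * W i u else 0)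
          = (if i = ℓ u then x u * W i u else 0) := by
        intro i
        refine if_congr ?_ rfl rfl
        constructor
        · exact fun h => h.2.symm
        · exact fun h => ⟨hxu, h.symm⟩
      rw [Finset.sum_congr rfl fun i _ => h2 i,
        Finset.sum_ite_eq' (Finset.range N) (ℓ u) (fun i => x u * W i u),
        if_pos (Finset.mem_range.2 (hℓN u))]
    · have hx0u : x u = 0 := le_antisymm (not_lt.1 hxu) (hx0 u)
      have hzero : ∀ i ∈ Finset.range N, (if 0 < x u ∧ ℓ u = i then x u * W i u else 0) = 0 := by
        intro i _
        rw [if_neg]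
        rintro ⟨h, -⟩
        exact hxu h
      rw [Finset.sum_eq_zero hzero, hx0u, zero_mul]
  -- (b) per-level bound
  have hb : ∀ i, (∑ u ∈ Xi i, x u * W i u)
      ≤ 2 * c * (Real.sqrt (∑ u ∈ Xi i, x u ^ 2) * Real.sqrt (∑ v, (Y i v) ^ 2)) := by
    intro i
    have hmem : ∀ u ∈ Xi i, 0 < x u ∧ ℓ u = i := by
      intro u hu
      rw [hXidef] at hu
      exact (Finset.mem_filter.1 hu).2
    have b1 : (∑ u ∈ Xi i, x u * W i u) ≤ (1/2 : ℝ) ^ i * ∑ u ∈ Xi i, W i u := by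
      rw [Finset.mul_sum]
      refine Finset.sum_le_sum fun u hu => ?_
      refine mul_le_mul_of_nonneg_right ?_ (hWnn i u)
      have := hℓ2 u (hmem u hu).1
      rwa [(hmem u hu).2] at this
    have b3 : (∑ u ∈ Xi i, W i u)
        = ∑ v, (((Xi i).filter (fun u => G.Adj v u)).card : ℝ) * Y i v := by
      rw [hWdef]
      dsimp only
      have e1 : ∀ u, (∑ v ∈ G.neighborFinset u, Y i v)
          = ∑ v, if G.Adj u v then Y i v else 0 := by
        intro u
        rw [neighborFinset_eq_filter, Finset.sum_filter]
      rw [Finset.sum_congr rfl fun u _ => e1 u, Finset.sum_comm]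
      refine Finset.sum_congr rfl fun v _ => ?_
      rw [← Finset.sum_filter]
      rw [show (Xi i).filter (fun u => G.Adj u v) = (Xi i).filter (fun u => G.Adj v u) from
        Finset.filter_congr fun u _ => by rw [adj_comm]]
      rw [Finset.sum_const, nsmul_eq_mul]
    have b4 : (∑ v, (((Xi i).filter (fun u => G.Adj v u)).card : ℝ) * Y i v)
        ≤ Real.sqrt (∑ v, (((Xi i).filter (fun u => G.Adj v u)).card : ℝ) ^ 2)
          * Real.sqrt (∑ v, (Y i v) ^ 2) :=
      Real.sum_mul_le_sqrt_mul_sqrt _ _ _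
    have b5 : Real.sqrt (∑ v, (((Xi i).filter (fun u => G.Adj v u)).card : ℝ) ^ 2)
        ≤ c * Real.sqrt ((Xi i).card) := by
      calc Real.sqrt (∑ v, (((Xi i).filter (fun u => G.Adj v u)).card : ℝ) ^ 2)
          ≤ Real.sqrt (c ^ 2 * (Xi i).card) := Real.sqrt_le_sqrt (hF (Xi i))
        _ = c * Real.sqrt ((Xi i).card) := by
            rw [Real.sqrt_mul (sq_nonneg c), Real.sqrt_sq hc0]
    have b6 : Real.sqrt ((Xi i).card) ≤ 2 ^ (i+1) * Real.sqrt (∑ u ∈ Xi i, x u ^ 2) := by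
      have hcard : ((Xi i).card : ℝ) * ((1/2 : ℝ) ^ (i+1)) ^ 2 ≤ ∑ u ∈ Xi i, x u ^ 2 := by
        calc ((Xi i).card : ℝ) * ((1/2 : ℝ) ^ (i+1)) ^ 2
            = ∑ _u ∈ Xi i, ((1/2 : ℝ) ^ (i+1)) ^ 2 := by
              rw [Finset.sum_const, nsmul_eq_mul]
          _ ≤ ∑ u ∈ Xi i, x u ^ 2 := by
              refine Finset.sum_le_sum fun u hu => ?_
              have h1 := hℓ1 u (hmem u hu).1
              rw [(hmem u hu).2] at h1
              exact pow_le_pow_left₀ (by positivity) h1.le 2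
      have h2 : Real.sqrt ((Xi i).card) * (1/2 : ℝ) ^ (i+1)
          ≤ Real.sqrt (∑ u ∈ Xi i, x u ^ 2) := by
        calc Real.sqrt ((Xi i).card) * (1/2 : ℝ) ^ (i+1)
            = Real.sqrt (((Xi i).card : ℝ) * ((1/2 : ℝ) ^ (i+1)) ^ 2) := by
              rw [Real.sqrt_mul (Nat.cast_nonneg _), Real.sqrt_sq (by positivity)]
          _ ≤ _ := Real.sqrt_le_sqrt hcard
      have h3 : ((1/2 : ℝ) ^ (i+1)) * 2 ^ (i+1) = 1 := by
        rw [← mul_pow]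
        norm_num
      calc Real.sqrt ((Xi i).card)
          = Real.sqrt ((Xi i).card) * (((1/2 : ℝ) ^ (i+1)) * 2 ^ (i+1)) := by
            rw [h3, mul_one]
        _ = (Real.sqrt ((Xi i).card) * (1/2 : ℝ) ^ (i+1)) * 2 ^ (i+1) := by ring
        _ ≤ Real.sqrt (∑ u ∈ Xi i, x u ^ 2) * 2 ^ (i+1) := by
            exact mul_le_mul_of_nonneg_right h2 (by positivity)
        _ = 2 ^ (i+1) * Real.sqrt (∑ u ∈ Xi i, x u ^ 2) := mul_comm _ _
    have hpow2 : (1/2 : ℝ) ^ i * 2 ^ (i+1) = 2 := by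
      rw [pow_succ, ← mul_assoc, ← mul_pow]
      norm_num
    calc (∑ u ∈ Xi i, x u * W i u)
        ≤ (1/2 : ℝ) ^ i * ∑ u ∈ Xi i, W i u := b1
      _ = (1/2 : ℝ) ^ i * ∑ v, (((Xi i).filter (fun u => G.Adj v u)).card : ℝ) * Y i v := by
          rw [b3]
      _ ≤ (1/2 : ℝ) ^ i * (Real.sqrt (∑ v, (((Xi i).filter (fun u => G.Adj v u)).card : ℝ) ^ 2)
            * Real.sqrt (∑ v, (Y i v) ^ 2)) := by
          exact mul_le_mul_of_nonneg_left b4 (by positivity)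
      _ ≤ (1/2 : ℝ) ^ i * ((c * Real.sqrt ((Xi i).card)) * Real.sqrt (∑ v, (Y i v) ^ 2)) := by
          refine mul_le_mul_of_nonneg_left ?_ (by positivity)
          exact mul_le_mul_of_nonneg_right b5 (Real.sqrt_nonneg _)
      _ ≤ (1/2 : ℝ) ^ i * ((c * (2 ^ (i+1) * Real.sqrt (∑ u ∈ Xi i, x u ^ 2)))
            * Real.sqrt (∑ v, (Y i v) ^ 2)) := by
          refine mul_le_mul_of_nonneg_left ?_ (by positivity)
          refine mul_le_mul_of_nonneg_right ?_ (Real.sqrt_nonneg _)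
          exact mul_le_mul_of_nonneg_left b6 hc0
      _ = ((1/2 : ℝ) ^ i * 2 ^ (i+1)) * c
            * (Real.sqrt (∑ u ∈ Xi i, x u ^ 2) * Real.sqrt (∑ v, (Y i v) ^ 2)) := by ring
      _ = 2 * c * (Real.sqrt (∑ u ∈ Xi i, x u ^ 2) * Real.sqrt (∑ v, (Y i v) ^ 2)) := by
          rw [hpow2]
  -- (c) sum the near part
  have hm1 : (∑ i ∈ Finset.range N, ∑ u ∈ Xi i, x u ^ 2) ≤ 1 := by
    have h1 : ∀ i, (∑ u ∈ Xi i, x u ^ 2)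
        = ∑ u, if 0 < x u ∧ ℓ u = i then x u ^ 2 else 0 := by
      intro i
      rw [hXidef]
      dsimp only
      rw [Finset.sum_filter]
    rw [Finset.sum_congr rfl fun i _ => h1 i, Finset.sum_comm]
    rw [← hx1]
    refine Finset.sum_le_sum fun u _ => ?_
    by_cases hxu : 0 < x u
    · have h2 : ∀ i, (if 0 < x u ∧ ℓ u = i then x u ^ 2 else 0)
          = (if i = ℓ u then x u ^ 2 else 0) := by
        intro i
        refine if_congr ?_ rfl rfl
        constructor
        · exact fun h => h.2.symm
        · exact fun h => ⟨hxu, h.symm⟩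
      rw [Finset.sum_congr rfl fun i _ => h2 i,
        Finset.sum_ite_eq' (Finset.range N) (ℓ u) (fun _ => x u ^ 2),
        if_pos (Finset.mem_range.2 (hℓN u))]
    · have hzero : ∀ i ∈ Finset.range N, (if 0 < x u ∧ ℓ u = i then x u ^ 2 else 0) = 0 := by
        intro i _
        rw [if_neg]
        rintro ⟨h, -⟩
        exact hxu h
      rw [Finset.sum_eq_zero hzero]
      exact sq_nonneg _
  have hβ : (∑ i ∈ Finset.range N, ∑ v, (Y i v) ^ 2) ≤ 2 * t + 1 := by
    rw [Finset.sum_comm]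
    have hv : ∀ v, (∑ i ∈ Finset.range N, (Y i v) ^ 2) ≤ (2 * t + 1) * x v ^ 2 := by
      intro v
      have e1 : ∀ i, (Y i v) ^ 2
          = if 0 < x v ∧ i ≤ ℓ v + t ∧ ℓ v ≤ i + t then x v ^ 2 else 0 := by
        intro i
        rw [hYdef]
        dsimp only
        split
        · rfl
        · exact zero_pow (by norm_num)
      rw [Finset.sum_congr rfl fun i _ => e1 i]
      have e2 : (∑ i ∈ Finset.range N,
            if 0 < x v ∧ i ≤ ℓ v + t ∧ ℓ v ≤ i + t then x v ^ 2 else 0)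
          ≤ ∑ i ∈ Finset.range N,
            if i ∈ Finset.Icc (ℓ v - t) (ℓ v + t) then x v ^ 2 else 0 := by
        refine Finset.sum_le_sum fun i _ => ?_
        by_cases h : 0 < x v ∧ i ≤ ℓ v + t ∧ ℓ v ≤ i + t
        · rw [if_pos h, if_pos]
          rw [Finset.mem_Icc]
          omega
        · rw [if_neg h]
          split
          · exact sq_nonneg _
          · exact le_refl 0
      refine e2.trans ?_
      rw [← Finset.sum_filter]
      rw [Finset.sum_const, nsmul_eq_mul]
      refine mul_le_mul_of_nonneg_right ?_ (sq_nonneg _)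
      have hcard : ((Finset.range N).filter (fun i => i ∈ Finset.Icc (ℓ v - t) (ℓ v + t))).card
          ≤ 2 * t + 1 := by
        calc ((Finset.range N).filter (fun i => i ∈ Finset.Icc (ℓ v - t) (ℓ v + t))).card
            ≤ (Finset.Icc (ℓ v - t) (ℓ v + t)).card := by
              refine Finset.card_le_card fun i hi => ?_
              exact (Finset.mem_filter.1 hi).2
          _ ≤ 2 * t + 1 := by
              rw [Nat.card_Icc]
              omega
      exact_mod_cast Nat.cast_le.2 hcard
    calc (∑ v, ∑ i ∈ Finset.range N, (Y i v) ^ 2)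
        ≤ ∑ v, (2 * t + 1) * x v ^ 2 := Finset.sum_le_sum fun v _ => hv v
      _ = (2 * t + 1) * ∑ v, x v ^ 2 := by rw [Finset.mul_sum]
      _ = 2 * t + 1 := by rw [hx1, mul_one]
  have hT3 : (∑ u, ∑ v ∈ (G.neighborFinset u).filter
        (fun v => ℓ v ≤ ℓ u + t ∧ ℓ u ≤ ℓ v + t), x u * x v)
      ≤ 2 * c * Real.sqrt (2 * t + 1) := by
    rw [Finset.sum_congr rfl fun u _ => ha1 u, ha2]
    calc (∑ i ∈ Finset.range N, ∑ u ∈ Xi i, x u * W i u)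
        ≤ ∑ i ∈ Finset.range N,
            2 * c * (Real.sqrt (∑ u ∈ Xi i, x u ^ 2) * Real.sqrt (∑ v, (Y i v) ^ 2)) :=
          Finset.sum_le_sum fun i _ => hb i
      _ = 2 * c * ∑ i ∈ Finset.range N,
            Real.sqrt (∑ u ∈ Xi i, x u ^ 2) * Real.sqrt (∑ v, (Y i v) ^ 2) := by
          rw [Finset.mul_sum]
      _ ≤ 2 * c * (Real.sqrt (∑ i ∈ Finset.range N, ∑ u ∈ Xi i, x u ^ 2)
            * Real.sqrt (∑ i ∈ Finset.range N, ∑ v, (Y i v) ^ 2)) := by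
          refine mul_le_mul_of_nonneg_left ?_ (by positivity)
          exact Real.sum_sqrt_mul_sqrt_le _
            (fun i => Finset.sum_nonneg fun u _ => sq_nonneg _)
            (fun i => Finset.sum_nonneg fun v _ => sq_nonneg _)
      _ ≤ 2 * c * (1 * Real.sqrt (2 * t + 1)) := by
          refine mul_le_mul_of_nonneg_left ?_ (by positivity)
          refine mul_le_mul ?_ (Real.sqrt_le_sqrt hβ) (Real.sqrt_nonneg _) zero_le_one
          calc Real.sqrt (∑ i ∈ Finset.range N, ∑ u ∈ Xi i, x u ^ 2)
              ≤ Real.sqrt 1 := Real.sqrt_le_sqrt hm1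
            _ = 1 := Real.sqrt_one
      _ = 2 * c * Real.sqrt (2 * t + 1) := by rw [one_mul]
  rw [hq]
  linarith


lemma core (c : ℝ) (hc0 : 0 ≤ c)
    (hF : ∀ X : Finset V,
      (∑ v, ((X.filter (fun u => G.Adj v u)).card : ℝ) ^ 2) ≤ c ^ 2 * X.card)
    (hne : ∃ v w, G.Adj v w) :
    specRad G ^ 2
      ≤ 128 * (Real.log ((G.maxDegree : ℝ) / specRad G) + 2) * c ^ 2 := by
  set ρ : ℝ := specRad G with hρdef
  set Δ : ℝ := (G.maxDegree : ℝ) with hΔdef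
  have hρ1 : 1 ≤ ρ := one_le_specRad G hne
  have hρ0 : 0 < ρ := lt_of_lt_of_le one_pos hρ1
  have hρΔ : ρ ≤ Δ := specRad_le_maxDegree G
  have hΔ1 : (1:ℝ) ≤ Δ := le_trans hρ1 hρΔ
  set L : ℝ := Real.log (Δ / ρ) with hLdef
  have hL0 : 0 ≤ L := Real.log_nonneg ((one_le_div hρ0).2 hρΔ)
  set n : ℕ := ⌈(3/2 : ℝ) * L⌉₊ with hndef
  set t : ℕ := 6 + n with htdef
  have hlog2 : (0.6931:ℝ) < Real.log 2 := by
    have := Real.log_two_gt_d9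
    linarith
  have hnL : (3/2 : ℝ) * L ≤ (n : ℝ) := Nat.le_ceil _
  have h2n : Δ / ρ ≤ (2:ℝ) ^ n := by
    have h1 : L ≤ (n : ℝ) * Real.log 2 := by nlinarith
    have h2 : Δ / ρ = Real.exp L := by
      rw [hLdef, Real.exp_log (by positivity)]
    rw [h2]
    calc Real.exp L ≤ Real.exp ((n : ℝ) * Real.log 2) := Real.exp_le_exp.2 h1
      _ = Real.exp (Real.log 2) ^ n := Real.exp_nat_mul _ n
      _ = 2 ^ n := by rw [Real.exp_log (by norm_num)]
  have hfar : 2 * Δ * (1/2 : ℝ) ^ t ≤ ρ / 16 := by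
    have h2t : (2:ℝ) ^ t = 64 * 2 ^ n := by rw [htdef, pow_add]; norm_num
    have hkey : 32 * Δ ≤ ρ * 2 ^ t := by
      have h3 : Δ ≤ ρ * 2 ^ n := by
        rw [div_le_iff₀ hρ0] at h2n
        linarith [h2n]
      rw [h2t]
      nlinarith
    have hppos : (0:ℝ) ≤ (1/2 : ℝ) ^ t := by positivity
    have h4 := mul_le_mul_of_nonneg_right hkey hppos
    have h5 : ρ * 2 ^ t * (1/2 : ℝ) ^ t = ρ := by
      rw [mul_assoc, ← mul_pow]
      norm_num
    rw [h5] at h4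
    nlinarith [pow_nonneg (show (0:ℝ) ≤ 1/2 by norm_num) t]
  have hstep : ∀ ε > (0:ℝ), ρ ≤ (ρ/16 + 2 * c * Real.sqrt (2 * t + 1)) + ε := by
    intro ε hε
    obtain ⟨x, hx0, hx1, hq⟩ := exists_near G hne ε hε
    have hce := core_eps G c hc0 hF t x hx0 hx1
    rw [← hρdef] at hq
    rw [← hΔdef] at hce
    linarith
  have hρle : ρ ≤ ρ/16 + 2 * c * Real.sqrt (2 * t + 1) :=
    le_of_forall_pos_le_add hstep
  have hb : ρ ≤ (32/15) * c * Real.sqrt (2 * t + 1) := by linarith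
  have hsq : ρ ^ 2 ≤ ((32/15) * c * Real.sqrt (2 * t + 1)) ^ 2 :=
    pow_le_pow_left₀ hρ0.le hb 2
  have hsq2 : ρ ^ 2 ≤ (1024/225) * c ^ 2 * (2 * t + 1) := by
    have h6 : ((32/15) * c * Real.sqrt (2 * t + 1)) ^ 2
        = (1024/225) * c ^ 2 * (Real.sqrt (2 * t + 1)) ^ 2 := by ring
    rw [h6, Real.sq_sqrt (by positivity)] at hsq
    exact hsq
  have htsize : 2 * (t : ℝ) + 1 ≤ 3 * L + 15 := by
    have h7 : (n : ℝ) < (3/2 : ℝ) * L + 1 := by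
      exact_mod_cast Nat.ceil_lt_add_one (by positivity)
    have h8 : (t : ℝ) = 6 + (n : ℝ) := by rw [htdef]; push_cast; ring
    linarith
  have h9 : c ^ 2 * (2 * (t : ℝ) + 1) ≤ c ^ 2 * (3 * L + 15) :=
    mul_le_mul_of_nonneg_left htsize (sq_nonneg c)
  have h10 : (0:ℝ) ≤ c ^ 2 * L := mul_nonneg (sq_nonneg c) hL0
  nlinarith [sq_nonneg c]

end Stmt11Aux

open Finset in
theorem stmt11 {V : Type*} [Fintype V] [DecidableEq V]
    (G : SimpleGraph V) [DecidableRel G.Adj]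
    (hne : ∃ v w, G.Adj v w) :
    ∃ X : Finset V, X.Nonempty ∧
      ∑ v : V, ((X.filter (fun u => G.Adj v u)).card : ℝ) ^ 2 ≥
        specRad G ^ 2 /
          (128 * (Real.log ((G.maxDegree : ℝ) / specRad G) + 2)) * X.card := by
  classical
  obtain ⟨a, b, hab⟩ := hne
  set F : Finset V → ℝ :=
    fun X => ∑ v : V, ((X.filter (fun u => G.Adj v u)).card : ℝ) ^ 2 with hFdef
  set P : Finset V → ℝ := fun X => F X / X.card with hPdef
  set 𝒮 : Finset (Finset V) :=
    Finset.univ.powerset.filter (fun X : Finset V => X.Nonempty) with h𝒮def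
  have h𝒮ne : 𝒮.Nonempty := by
    refine ⟨{a}, ?_⟩
    rw [h𝒮def, Finset.mem_filter]
    exact ⟨Finset.mem_powerset.2 (Finset.subset_univ _), Finset.singleton_nonempty a⟩
  obtain ⟨X₀, hX₀mem, hmax⟩ := Finset.exists_max_image 𝒮 P h𝒮ne
  have hX₀ne : X₀.Nonempty := by
    rw [h𝒮def, Finset.mem_filter] at hX₀mem
    exact hX₀mem.2
  have hFnn : ∀ X, 0 ≤ F X := fun X =>
    Finset.sum_nonneg fun v _ => sq_nonneg _
  have hPnn : 0 ≤ P X₀ := div_nonneg (hFnn X₀) (Nat.cast_nonneg _)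
  set c : ℝ := Real.sqrt (P X₀) with hcdef
  have hc0 : 0 ≤ c := Real.sqrt_nonneg _
  have hc2 : c ^ 2 = P X₀ := Real.sq_sqrt hPnn
  have hX₀card : (0:ℝ) < X₀.card := by
    exact_mod_cast Finset.card_pos.2 hX₀ne
  have hF : ∀ X : Finset V,
      (∑ v, ((X.filter (fun u => G.Adj v u)).card : ℝ) ^ 2) ≤ c ^ 2 * X.card := by
    intro X
    rcases X.eq_empty_or_nonempty with rfl | hXne
    · simp
    · have hmem : X ∈ 𝒮 := by
        rw [h𝒮def, Finset.mem_filter]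
        exact ⟨Finset.mem_powerset.2 (Finset.subset_univ _), hXne⟩
      have h1 : P X ≤ P X₀ := hmax X hmem
      have hXcard : (0:ℝ) < X.card := by exact_mod_cast Finset.card_pos.2 hXne
      have h2 : F X = P X * X.card := by
        rw [hPdef]
        field_simp
      calc (∑ v, ((X.filter (fun u => G.Adj v u)).card : ℝ) ^ 2) = F X := rfl
        _ = P X * X.card := h2
        _ ≤ P X₀ * X.card := mul_le_mul_of_nonneg_right h1 hXcard.le
        _ = c ^ 2 * X.card := by rw [hc2]
  have hcore := Stmt11Aux.core G c hc0 hF ⟨a, b, hab⟩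
  refine ⟨X₀, hX₀ne, ?_⟩
  have hDpos : (0:ℝ) < 128 * (Real.log ((G.maxDegree : ℝ) / specRad G) + 2) := by
    have hρ1 : 1 ≤ specRad G := Stmt11Aux.one_le_specRad G ⟨a, b, hab⟩
    have hρΔ : specRad G ≤ (G.maxDegree : ℝ) := Stmt11Aux.specRad_le_maxDegree G
    have : 0 ≤ Real.log ((G.maxDegree : ℝ) / specRad G) :=
      Real.log_nonneg ((one_le_div (by linarith)).2 hρΔ)
    linarith
  have h3 : specRad G ^ 2 / (128 * (Real.log ((G.maxDegree : ℝ) / specRad G) + 2)) ≤ c ^ 2 :=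
    (div_le_iff₀ hDpos).2 (by linarith [hcore])
  have h4 : F X₀ = c ^ 2 * X₀.card := by
    rw [hc2, hPdef]
    field_simp
  calc ∑ v : V, ((X₀.filter (fun u => G.Adj v u)).card : ℝ) ^ 2 = F X₀ := rfl
    _ = c ^ 2 * X₀.card := h4
    _ ≥ specRad G ^ 2 / (128 * (Real.log ((G.maxDegree : ℝ) / specRad G) + 2)) * X₀.card :=
        mul_le_mul_of_nonneg_right h3 hX₀card.le
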